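/- Let m ≥ 2 be even, k coprime to m, and let ∘ denote x∘y = x^(2^k)·y + y^(2^k)·x on F_{2^m}. Then for every nonzero a ∈ F_{2^m}, the equation x ∘ a = 0 has exactly the solutions x = 0 and x = a; equivalently x ↦ x^(2^k+1) is APN on F_{2^m}. -/

import Mathlib

lemma dvd_one_of_dvd_pow_sub_one {d k m : ℕ} (hkm : Nat.gcd k m = 1)
    (hdk : d ∣ 2 ^ k - 1) (hdm : d ∣ 2 ^ m - 1) : d ∣ 1 := by
  have h1 : ((2 : ZMod d)) ^ k = 1 := by
    have : ((2 ^ k - 1 : ℕ) : ZMod d) = 0 :=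
      (ZMod.natCast_eq_zero_iff _ _).mpr hdk
    have h2 : ((2 ^ k : ℕ) : ZMod d) = ((2 ^ k - 1 : ℕ) : ZMod d) + ((1 : ℕ) : ZMod d) := by
      rw [← Nat.cast_add, Nat.sub_add_cancel (Nat.one_le_two_pow)]
    push_cast at h2
    rw [h2, this, zero_add]
  have h2 : ((2 : ZMod d)) ^ m = 1 := by
    have : ((2 ^ m - 1 : ℕ) : ZMod d) = 0 :=
      (ZMod.natCast_eq_zero_iff _ _).mpr hdm
    have h2 : ((2 ^ m : ℕ) : ZMod d) = ((2 ^ m - 1 : ℕ) : ZMod d) + ((1 : ℕ) : ZMod d) := by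
      rw [← Nat.cast_add, Nat.sub_add_cancel (Nat.one_le_two_pow)]
    push_cast at h2
    rw [h2, this, zero_add]
  have := (pow_gcd_eq_one (a := (2 : ZMod d))).mpr ⟨h1, h2⟩
  rw [hkm, pow_one] at this
  have : ((1 : ℕ) : ZMod d) = 0 := by
    have := sub_eq_zero_of_eq this
    norm_num at this
    simpa using this
  exact (ZMod.natCast_eq_zero_iff _ _).mp this

theorem stmt_17 (m k : ℕ) (hm : 2 ≤ m) (hme : Even m) (hk : 0 < k)
    (hkm : Nat.gcd k m = 1)
    (F : Type*) [Field F] [Fintype F] (hF : Fintype.card F = 2 ^ m) :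
    ∀ a : F, a ≠ 0 → ∀ x : F,
      x ^ (2 ^ k) * a + a ^ (2 ^ k) * x = 0 ↔ x = 0 ∨ x = a := by
  -- characteristic 2
  haveI : CharP F (ringChar F) := ringChar.charP F
  have hp : (ringChar F).Prime := CharP.char_is_prime F _
  obtain ⟨n, hcard⟩ := FiniteField.card F (ringChar F)
  have hchar2 : ringChar F = 2 := by
    have : ringChar F ∣ 2 ^ m := by
      rw [← hF, hcard.2]
      exact dvd_pow_self _ (by positivity)
    have := (Nat.Prime.dvd_of_dvd_pow hp this)
    exact (Nat.prime_dvd_prime_iff_eq hp Nat.prime_two).mp this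
  haveI : CharP F 2 := hchar2 ▸ ringChar.charP F
  intro a ha x
  constructor
  · intro h
    by_cases hx : x = 0
    · exact Or.inl hx
    · right
      -- rewrite as equality
      have heq : x ^ (2 ^ k) * a = a ^ (2 ^ k) * x := by
        rw [add_eq_zero_iff_eq_neg, CharTwo.neg_eq] at h
        exact h
      set u : F := x * a⁻¹ with hu
      have hu0 : u ≠ 0 := mul_ne_zero hx (inv_ne_zero ha)
      have hupow : u ^ (2 ^ k) = u := by
        rw [hu, mul_pow, inv_pow, ← div_eq_mul_inv, ← div_eq_mul_inv,
          div_eq_div_iff (pow_ne_zero _ ha) ha, heq, mul_comm]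
      have h1 : u ^ (2 ^ k - 1) = 1 := by
        have : u ^ (2 ^ k - 1) * u = 1 * u := by
          rw [one_mul, ← pow_succ, Nat.sub_add_cancel Nat.one_le_two_pow, hupow]
        exact mul_right_cancel₀ hu0 this
      have h2 : u ^ (2 ^ m - 1) = 1 := by
        rw [← hF]; exact FiniteField.pow_card_sub_one_eq_one u hu0
      have hd1 : orderOf u ∣ 2 ^ k - 1 := orderOf_dvd_of_pow_eq_one h1
      have hd2 : orderOf u ∣ 2 ^ m - 1 := orderOf_dvd_of_pow_eq_one h2
      have : orderOf u = 1 :=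
        Nat.dvd_one.mp (dvd_one_of_dvd_pow_sub_one hkm hd1 hd2)
      have hu1 : u = 1 := orderOf_eq_one_iff.mp this
      have : x * a⁻¹ = 1 := hu1
      field_simp at this
      exact this
  · rintro (rfl | rfl)
    · simp
    · rw [mul_comm]
      exact CharTwo.add_self_eq_zero _
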